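/- arXiv:1601.00254 — 2 statements merged into one kernel-verified Lean document; each statement's English description precedes it below -/
import Mathlib

section
/- For a finite poset P and n ≥ 1, the strict order polynomial satisfies Ω^<(P, t) = (-1)^{|P|} · Ω^≤(P, -t), where Ω^≤(P,n) counts order-preserving maps P → [n] and Ω^<(P,n) counts strictly order-preserving maps P → [n]. -/
open Finset Polynomial
open scoped Classical

namespace StanleyRec

variable {P : Type} [Fintype P] [PartialOrder P]


/-- order-preserving maps `s → [1..n]`, encoded as functions `P → ℕ` that are `0` off `s`. -/
noncomputable def OPF (s : Finset P) (n : ℕ) : Finset (P → ℕ) :=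
  (Fintype.piFinset fun x => if x ∈ s then Finset.Icc 1 n else {0}).filter
    (fun f => ∀ x ∈ s, ∀ y ∈ s, x < y → f x ≤ f y)

/-- strictly order-preserving maps. -/
noncomputable def SPF (s : Finset P) (n : ℕ) : Finset (P → ℕ) :=
  (Fintype.piFinset fun x => if x ∈ s then Finset.Icc 1 n else {0}).filter
    (fun f => ∀ x ∈ s, ∀ y ∈ s, x < y → f x < f y)

/-- surjective order-preserving maps `s → [1..k]`. -/
noncomputable def SurF (s : Finset P) (k : ℕ) : Finset (P → ℕ) :=
  (OPF s k).filter (fun f => ∀ v ∈ Finset.Icc 1 k, ∃ x ∈ s, f x = v)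

/-- nonempty up-sets of `s`. -/
noncomputable def filters (s : Finset P) : Finset (Finset P) :=
  s.powerset.filter (fun F => F.Nonempty ∧ ∀ x ∈ F, ∀ y ∈ s, x < y → y ∈ F)

/-- all up-sets of `s` (including `∅`). -/
noncomputable def filters0 (s : Finset P) : Finset (Finset P) :=
  s.powerset.filter (fun F => ∀ x ∈ F, ∀ y ∈ s, x < y → y ∈ F)

lemma mem_OPF {s : Finset P} {n : ℕ} {f : P → ℕ} :
    f ∈ OPF s n ↔ (∀ x ∈ s, 1 ≤ f x ∧ f x ≤ n) ∧ (∀ x, x ∉ s → f x = 0) ∧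
      ∀ x ∈ s, ∀ y ∈ s, x < y → f x ≤ f y := by
  simp only [OPF, mem_filter, Fintype.mem_piFinset]
  constructor
  · rintro ⟨h1, h2⟩
    refine ⟨fun x hx => ?_, fun x hx => ?_, h2⟩
    · have := h1 x; rw [if_pos hx, mem_Icc] at this; exact this
    · have := h1 x; rwa [if_neg hx, mem_singleton] at this
  · rintro ⟨h1, h2, h3⟩
    refine ⟨fun x => ?_, h3⟩
    by_cases hx : x ∈ s
    · rw [if_pos hx, mem_Icc]; exact h1 x hx
    · rw [if_neg hx, mem_singleton]; exact h2 x hx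

lemma mem_SPF {s : Finset P} {n : ℕ} {f : P → ℕ} :
    f ∈ SPF s n ↔ (∀ x ∈ s, 1 ≤ f x ∧ f x ≤ n) ∧ (∀ x, x ∉ s → f x = 0) ∧
      ∀ x ∈ s, ∀ y ∈ s, x < y → f x < f y := by
  simp only [SPF, mem_filter, Fintype.mem_piFinset]
  constructor
  · rintro ⟨h1, h2⟩
    refine ⟨fun x hx => ?_, fun x hx => ?_, h2⟩
    · have := h1 x; rw [if_pos hx, mem_Icc] at this; exact this
    · have := h1 x; rwa [if_neg hx, mem_singleton] at this
  · rintro ⟨h1, h2, h3⟩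
    refine ⟨fun x => ?_, h3⟩
    by_cases hx : x ∈ s
    · rw [if_pos hx, mem_Icc]; exact h1 x hx
    · rw [if_neg hx, mem_singleton]; exact h2 x hx

lemma mem_SurF {s : Finset P} {k : ℕ} {f : P → ℕ} :
    f ∈ SurF s k ↔ f ∈ OPF s k ∧ ∀ v ∈ Finset.Icc 1 k, ∃ x ∈ s, f x = v := by
  simp [SurF, mem_filter]

lemma mem_filters {s F : Finset P} :
    F ∈ filters s ↔ F ⊆ s ∧ F.Nonempty ∧ ∀ x ∈ F, ∀ y ∈ s, x < y → y ∈ F := by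
  simp [filters, mem_filter, mem_powerset, and_assoc]

lemma mem_filters0 {s F : Finset P} :
    F ∈ filters0 s ↔ F ⊆ s ∧ ∀ x ∈ F, ∀ y ∈ s, x < y → y ∈ F := by
  simp [filters0, mem_filter, mem_powerset]

lemma SPF_eq_filter (s : Finset P) (n : ℕ) :
    SPF s n = (OPF s n).filter (fun f => ∀ x ∈ s, ∀ y ∈ s, x < y → f x < f y) := by
  ext f
  simp only [mem_filter, mem_SPF, mem_OPF]
  constructor
  · rintro ⟨h1, h2, h3⟩; exact ⟨⟨h1, h2, fun x hx y hy hxy => (h3 x hx y hy hxy).le⟩, h3⟩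
  · rintro ⟨⟨h1, h2, _⟩, h3⟩; exact ⟨h1, h2, h3⟩

lemma OPF_empty (n : ℕ) : OPF (∅ : Finset P) n = {fun _ => 0} := by
  ext f
  simp only [mem_OPF, mem_singleton, notMem_empty]
  constructor
  · rintro ⟨-, h2, -⟩; funext x; exact h2 x (by simp)
  · rintro rfl; exact ⟨by simp, fun x _ => rfl, by simp⟩

lemma SPF_empty (n : ℕ) : SPF (∅ : Finset P) n = {fun _ => 0} := by
  ext f
  simp only [mem_SPF, mem_singleton, notMem_empty]
  constructor
  · rintro ⟨-, h2, -⟩; funext x; exact h2 x (by simp)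
  · rintro rfl; exact ⟨by simp, fun x _ => rfl, by simp⟩

lemma OPF_zero_of_nonempty {s : Finset P} (hs : s.Nonempty) (f : P → ℕ) : f ∉ OPF s 0 := by
  intro hf
  obtain ⟨x, hx⟩ := hs
  have := (mem_OPF.1 hf).1 x hx
  omega

lemma card_OPF_zero (s : Finset P) : (OPF s 0).card = if s = ∅ then 1 else 0 := by
  split_ifs with h
  · subst h; rw [OPF_empty]; simp
  · rw [Finset.card_eq_zero, Finset.eq_empty_iff_forall_notMem]
    exact fun f => OPF_zero_of_nonempty (nonempty_iff_ne_empty.2 h) f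

lemma card_SPF_zero (s : Finset P) : (SPF s 0).card = if s = ∅ then 1 else 0 := by
  split_ifs with h
  · subst h; rw [SPF_empty]; simp
  · rw [Finset.card_eq_zero, Finset.eq_empty_iff_forall_notMem]
    intro f hf
    obtain ⟨x, hx⟩ := nonempty_iff_ne_empty.2 h
    have := (mem_SPF.1 hf).1 x hx
    omega

lemma SurF_zero (s : Finset P) : SurF s 0 = OPF s 0 := by
  ext f; simp [mem_SurF]

lemma card_SurF_of_lt {s : Finset P} {k : ℕ} (h : s.card < k) : (SurF s k).card = 0 := by
  rw [Finset.card_eq_zero, Finset.eq_empty_iff_forall_notMem]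
  intro f hf
  obtain ⟨-, hsur⟩ := mem_SurF.1 hf
  have : (Finset.Icc 1 k).card ≤ s.card := by
    apply Finset.card_le_card_of_surjOn f
    intro v hv
    obtain ⟨x, hx, hfx⟩ := hsur v hv
    exact ⟨x, hx, hfx⟩
  rw [Nat.card_Icc] at this
  omega

lemma card_SurF_zero (s : Finset P) : (SurF s 0).card = if s = ∅ then 1 else 0 := by
  rw [SurF_zero, card_OPF_zero]

lemma card_SurF_zero_of_nonempty {s : Finset P} (hs : s.Nonempty) : (SurF s 0).card = 0 := by
  rw [card_SurF_zero, if_neg (nonempty_iff_ne_empty.1 hs)]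

noncomputable def bin (k : ℕ) : Polynomial ℚ :=
  Polynomial.C ((k.factorial : ℚ)⁻¹) * descPochhammer ℚ k

lemma bin_zero : bin 0 = 1 := by
  simp [bin, descPochhammer_zero, Nat.factorial_zero]

lemma bin_eval_nat (k n : ℕ) : (bin k).eval (n : ℚ) = (n.choose k : ℚ) := by
  rw [bin, eval_mul, eval_C, descPochhammer_eval_eq_descFactorial ℚ n k,
    Nat.descFactorial_eq_factorial_mul_choose]
  have hk : (k.factorial : ℚ) ≠ 0 := Nat.cast_ne_zero.2 k.factorial_ne_zero
  push_cast
  field_simp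

lemma poly_ext {p q : Polynomial ℚ} (h : ∀ n : ℕ, 1 ≤ n → p.eval (n : ℚ) = q.eval (n : ℚ)) :
    p = q := by
  have hroot : ∀ m : ℕ, (p - q).IsRoot ((m + 1 : ℕ) : ℚ) := by
    intro m
    simp only [IsRoot, eval_sub, sub_eq_zero]
    exact h (m + 1) (by omega)
  have hpq : p - q = 0 := by
    apply Polynomial.eq_zero_of_infinite_isRoot
    refine Set.infinite_of_injective_forall_mem
      (f := fun m : ℕ => ((m + 1 : ℕ) : ℚ)) ?_ ?_
    · intro a b hab
      have : ((a + 1 : ℕ) : ℚ) = ((b + 1 : ℕ) : ℚ) := hab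
      exact Nat.succ_injective (by exact_mod_cast this)
    · intro m; exact hroot m
  exact sub_eq_zero.1 hpq

lemma bin_pascal (k : ℕ) : (bin (k + 1)).comp (X + 1) = bin (k + 1) + bin k := by
  apply poly_ext
  intro n hn
  rw [eval_comp]
  simp only [eval_add, eval_X, eval_one]
  have h1 : ((n : ℚ) + 1) = ((n + 1 : ℕ) : ℚ) := by push_cast; ring
  rw [h1, bin_eval_nat, bin_eval_nat, bin_eval_nat]
  rw [Nat.choose_succ_succ']
  push_cast; ring

lemma bin_eval_succ (k : ℕ) (y : ℚ) :
    (bin (k + 1)).eval (y + 1) = (bin (k + 1)).eval y + (bin k).eval y := by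
  have := congrArg (Polynomial.eval y) (bin_pascal k)
  rwa [eval_comp, eval_add, eval_add, eval_X, eval_one] at this

lemma bin_eval_zero (k : ℕ) : (bin k).eval 0 = if k = 0 then 1 else 0 := by
  have h := bin_eval_nat k 0
  rw [Nat.cast_zero] at h
  rw [h]
  cases k with
  | zero => simp
  | succ k => simp [Nat.choose_eq_zero_of_lt (Nat.succ_pos k)]

lemma bin_eval_neg (k n : ℕ) :
    (bin (k + 1)).eval (-(n : ℚ)) = -∑ v ∈ Finset.Icc 1 n, (bin k).eval (-(v : ℚ)) := by
  induction n with
  | zero => simp [bin_eval_zero]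
  | succ n ih =>
    have hstep := bin_eval_succ k (-((n + 1 : ℕ) : ℚ))
    have h1 : (-((n + 1 : ℕ) : ℚ)) + 1 = -(n : ℚ) := by push_cast; ring
    rw [h1] at hstep
    rw [Finset.sum_Icc_succ_top (by omega : 1 ≤ n + 1)]
    have : (bin (k + 1)).eval (-((n + 1 : ℕ) : ℚ))
        = (bin (k + 1)).eval (-(n : ℚ)) - (bin k).eval (-((n + 1 : ℕ) : ℚ)) := by
      linarith [hstep]
    rw [this, ih]
    ring

lemma card_SurF_succ (s : Finset P) (k : ℕ) :
    (SurF s (k + 1)).card = ∑ F ∈ filters s, (SurF (s \ F) k).card := by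
  rw [← Finset.card_sigma]
  refine Finset.card_bij'
    (fun f _ => (⟨s.filter (fun x => f x = k + 1),
        fun x => if f x = k + 1 then 0 else f x⟩ : Σ _ : Finset P, (P → ℕ)))
    (fun p _ => fun x => if x ∈ p.1 then k + 1 else p.2 x) ?_ ?_ ?_ ?_
  · -- forward maps into sigma
    intro f hf
    try dsimp only
    obtain ⟨hfo, hfsur⟩ := mem_SurF.1 hf
    obtain ⟨hb, hz, hord⟩ := mem_OPF.1 hfo
    rw [Finset.mem_sigma]
    constructor
    · rw [mem_filters]
      refine ⟨filter_subset _ _, ?_, ?_⟩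
      · obtain ⟨x, hx, hfx⟩ := hfsur (k + 1) (by simp)
        exact ⟨x, mem_filter.2 ⟨hx, hfx⟩⟩
      · intro x hx y hy hxy
        rw [mem_filter] at hx ⊢
        refine ⟨hy, ?_⟩
        have h1 := hord x hx.1 y hy hxy
        have h2 := (hb y hy).2
        omega
    · rw [mem_SurF, mem_OPF]
      try dsimp only
      refine ⟨⟨?_, ?_, ?_⟩, ?_⟩
      · intro x hx
        rw [mem_sdiff, mem_filter] at hx
        have hxs : x ∈ s := hx.1
        have hne : f x ≠ k + 1 := fun h => hx.2 ⟨hxs, h⟩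
        rw [if_neg hne]
        have := hb x hxs
        omega
      · intro x hx
        rw [mem_sdiff, mem_filter] at hx
        push_neg at hx
        by_cases hxs : x ∈ s
        · have := hx hxs
          rw [if_pos this.2]
        · have := hz x hxs
          rw [if_neg (show ¬ _ = _ + 1 by omega)]
          exact this
      · intro x hx y hy hxy
        rw [mem_sdiff, mem_filter] at hx hy
        push_neg at hx hy
        rw [if_neg (hx.2 hx.1), if_neg (hy.2 hy.1)]
        exact hord x hx.1 y hy.1 hxy
      · intro v hv
        rw [mem_Icc] at hv
        obtain ⟨x, hx, hfx⟩ := hfsur v (by rw [mem_Icc]; omega)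
        refine ⟨x, ?_, ?_⟩
        · rw [mem_sdiff, mem_filter]
          push_neg
          exact ⟨hx, fun _ => by omega⟩
        · rw [hfx]; exact if_neg (by omega)
  · -- backward maps into SurF
    rintro ⟨F, g⟩ hp
    try dsimp only
    rw [Finset.mem_sigma] at hp
    dsimp only at hp
    obtain ⟨hF, hg⟩ := hp
    obtain ⟨hFs, hFne, hFup⟩ := mem_filters.1 hF
    obtain ⟨hgo, hgsur⟩ := mem_SurF.1 hg
    obtain ⟨hb, hz, hord⟩ := mem_OPF.1 hgo
    have hgF : ∀ x ∈ F, g x = 0 := fun x hx => hz x (by simp [mem_sdiff, hx])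
    rw [mem_SurF, mem_OPF]
    try dsimp only
    refine ⟨⟨?_, ?_, ?_⟩, ?_⟩
    · intro x hx
      by_cases hxF : x ∈ F
      · rw [if_pos hxF]; omega
      · rw [if_neg hxF]
        have := hb x (mem_sdiff.2 ⟨hx, hxF⟩)
        omega
    · intro x hx
      have hxF : x ∉ F := fun h => hx (hFs h)
      rw [if_neg hxF]
      exact hz x (by rw [mem_sdiff]; tauto)
    · intro x hx y hy hxy
      by_cases hyF : y ∈ F
      · rw [if_pos hyF]
        by_cases hxF : x ∈ F
        · rw [if_pos hxF]
        · rw [if_neg hxF]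
          have := hb x (mem_sdiff.2 ⟨hx, hxF⟩)
          omega
      · have hxF : x ∉ F := fun h => hyF (hFup x h y hy hxy)
        rw [if_neg hxF, if_neg hyF]
        exact hord x (mem_sdiff.2 ⟨hx, hxF⟩) y (mem_sdiff.2 ⟨hy, hyF⟩) hxy
    · intro v hv
      rw [mem_Icc] at hv
      by_cases hvk : v = k + 1
      · obtain ⟨x, hxF⟩ := hFne
        exact ⟨x, hFs hxF, by rw [if_pos hxF, hvk]⟩
      · obtain ⟨x, hx, hgx⟩ := hgsur v (by rw [mem_Icc]; omega)
        rw [mem_sdiff] at hx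
        exact ⟨x, hx.1, by rw [if_neg hx.2]; exact hgx⟩
  · -- left inverse
    intro f hf
    try dsimp only
    obtain ⟨hfo, _⟩ := mem_SurF.1 hf
    obtain ⟨hb, hz, _⟩ := mem_OPF.1 hfo
    funext x
    by_cases hxF : x ∈ s.filter (fun x => f x = k + 1)
    · rw [if_pos hxF]
      exact ((mem_filter.1 hxF).2).symm
    · rw [if_neg hxF]
      have hne : f x ≠ k + 1 := by
        intro h
        by_cases hxs : x ∈ s
        · exact hxF (mem_filter.2 ⟨hxs, h⟩)
        · have := hz x hxs; omega
      rw [if_neg hne]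
  · -- right inverse
    rintro ⟨F, g⟩ hp
    try dsimp only
    rw [Finset.mem_sigma] at hp
    dsimp only at hp
    obtain ⟨hF, hg⟩ := hp
    obtain ⟨hFs, hFne, hFup⟩ := mem_filters.1 hF
    obtain ⟨hb, hz, hord⟩ := mem_OPF.1 ((mem_SurF.1 hg).1)
    have hgF : ∀ x, x ∉ s \ F → g x = 0 := hz
    refine Sigma.ext ?_ (heq_of_eq ?_)
    · dsimp only
      ext x
      rw [mem_filter]
      constructor
      · rintro ⟨hxs, hx⟩
        by_contra hxF
        rw [if_neg hxF] at hx
        by_cases hxsd : x ∈ s \ F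
        · have := hb x hxsd; omega
        · have := hgF x hxsd; omega
      · intro hxF
        exact ⟨hFs hxF, by rw [if_pos hxF]⟩
    · dsimp only
      funext x
      by_cases hxF : x ∈ F
      · simp only [if_pos hxF]
        exact (hgF x (by simp [mem_sdiff, hxF])).symm
      · simp only [if_neg hxF]
        have hne : g x ≠ k + 1 := by
          by_cases hxsd : x ∈ s \ F
          · have := hb x hxsd; omega
          · have := hgF x hxsd; omega
        rw [if_neg hne]

lemma card_OPF_succ (s : Finset P) (n : ℕ) :
    (OPF s (n + 1)).card = ∑ F ∈ filters0 s, (OPF (s \ F) n).card := by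
  rw [← Finset.card_sigma]
  refine Finset.card_bij'
    (fun f _ => (⟨s.filter (fun x => f x = n + 1),
        fun x => if f x = n + 1 then 0 else f x⟩ : Σ _ : Finset P, (P → ℕ)))
    (fun p _ => fun x => if x ∈ p.1 then n + 1 else p.2 x) ?_ ?_ ?_ ?_
  · intro f hf
    try dsimp only
    obtain ⟨hb, hz, hord⟩ := mem_OPF.1 hf
    rw [Finset.mem_sigma]
    constructor
    · rw [mem_filters0]
      refine ⟨filter_subset _ _, ?_⟩
      intro x hx y hy hxy
      rw [mem_filter] at hx ⊢
      refine ⟨hy, ?_⟩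
      have h1 := hord x hx.1 y hy hxy
      have h2 := (hb y hy).2
      omega
    · rw [mem_OPF]
      try dsimp only
      refine ⟨?_, ?_, ?_⟩
      · intro x hx
        rw [mem_sdiff, mem_filter] at hx
        have hxs : x ∈ s := hx.1
        have hne : f x ≠ n + 1 := fun h => hx.2 ⟨hxs, h⟩
        rw [if_neg hne]
        have := hb x hxs
        omega
      · intro x hx
        rw [mem_sdiff, mem_filter] at hx
        push_neg at hx
        by_cases hxs : x ∈ s
        · have := hx hxs
          rw [if_pos this.2]
        · have := hz x hxs
          rw [if_neg (show ¬ _ = _ + 1 by omega)]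
          exact this
      · intro x hx y hy hxy
        rw [mem_sdiff, mem_filter] at hx hy
        push_neg at hx hy
        rw [if_neg (hx.2 hx.1), if_neg (hy.2 hy.1)]
        exact hord x hx.1 y hy.1 hxy
  · rintro ⟨F, g⟩ hp
    try dsimp only
    rw [Finset.mem_sigma] at hp
    dsimp only at hp
    obtain ⟨hF, hg⟩ := hp
    obtain ⟨hFs, hFup⟩ := mem_filters0.1 hF
    obtain ⟨hb, hz, hord⟩ := mem_OPF.1 hg
    rw [mem_OPF]
    try dsimp only
    refine ⟨?_, ?_, ?_⟩
    · intro x hx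
      by_cases hxF : x ∈ F
      · rw [if_pos hxF]; omega
      · rw [if_neg hxF]
        have := hb x (mem_sdiff.2 ⟨hx, hxF⟩)
        omega
    · intro x hx
      have hxF : x ∉ F := fun h => hx (hFs h)
      rw [if_neg hxF]
      exact hz x (by rw [mem_sdiff]; tauto)
    · intro x hx y hy hxy
      by_cases hyF : y ∈ F
      · rw [if_pos hyF]
        by_cases hxF : x ∈ F
        · rw [if_pos hxF]
        · rw [if_neg hxF]
          have := hb x (mem_sdiff.2 ⟨hx, hxF⟩)
          omega
      · have hxF : x ∉ F := fun h => hyF (hFup x h y hy hxy)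
        rw [if_neg hxF, if_neg hyF]
        exact hord x (mem_sdiff.2 ⟨hx, hxF⟩) y (mem_sdiff.2 ⟨hy, hyF⟩) hxy
  · intro f hf
    try dsimp only
    obtain ⟨hb, hz, _⟩ := mem_OPF.1 hf
    funext x
    by_cases hxF : x ∈ s.filter (fun x => f x = n + 1)
    · rw [if_pos hxF]
      exact ((mem_filter.1 hxF).2).symm
    · rw [if_neg hxF]
      have hne : f x ≠ n + 1 := by
        intro h
        by_cases hxs : x ∈ s
        · exact hxF (mem_filter.2 ⟨hxs, h⟩)
        · have := hz x hxs; omega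
      rw [if_neg hne]
  · rintro ⟨F, g⟩ hp
    try dsimp only
    rw [Finset.mem_sigma] at hp
    dsimp only at hp
    obtain ⟨hF, hg⟩ := hp
    obtain ⟨hFs, hFup⟩ := mem_filters0.1 hF
    obtain ⟨hb, hz, hord⟩ := mem_OPF.1 hg
    refine Sigma.ext ?_ (heq_of_eq ?_)
    · dsimp only
      ext x
      rw [mem_filter]
      constructor
      · rintro ⟨hxs, hx⟩
        by_contra hxF
        rw [if_neg hxF] at hx
        by_cases hxsd : x ∈ s \ F
        · have := hb x hxsd; omega
        · have := hz x hxsd; omega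
      · intro hxF
        exact ⟨hFs hxF, by rw [if_pos hxF]⟩
    · dsimp only
      funext x
      by_cases hxF : x ∈ F
      · simp only [if_pos hxF]
        exact (hz x (by simp [mem_sdiff, hxF])).symm
      · simp only [if_neg hxF]
        have hne : g x ≠ n + 1 := by
          by_cases hxsd : x ∈ s \ F
          · have := hb x hxsd; omega
          · have := hz x hxsd; omega
        rw [if_neg hne]

lemma filters0_eq (s : Finset P) : filters0 s = insert ∅ (filters s) := by
  ext F
  rw [mem_filters0, Finset.mem_insert, mem_filters]
  constructor
  · rintro ⟨h1, h2⟩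
    rcases F.eq_empty_or_nonempty with h | h
    · exact Or.inl h
    · exact Or.inr ⟨h1, h, h2⟩
  · rintro (rfl | ⟨h1, h2, h3⟩)
    · exact ⟨empty_subset _, by simp⟩
    · exact ⟨h1, h3⟩

lemma empty_not_mem_filters (s : Finset P) : (∅ : Finset P) ∉ filters s := by
  rw [mem_filters]
  rintro ⟨-, h, -⟩
  exact Finset.not_nonempty_empty h

lemma card_OPF_succ' (s : Finset P) (n : ℕ) :
    (OPF s (n + 1)).card = (OPF s n).card + ∑ F ∈ filters s, (OPF (s \ F) n).card := by
  rw [card_OPF_succ, filters0_eq, Finset.sum_insert (empty_not_mem_filters s), sdiff_empty]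

lemma sdiff_card_lt {s F : Finset P} (hF : F ∈ filters s) :
    (s \ F).card < Fintype.card P := by
  obtain ⟨hFs, ⟨x, hx⟩, -⟩ := mem_filters.1 hF
  have h1 : s \ F ⊂ univ := by
    rw [Finset.ssubset_iff_of_subset (subset_univ _)]
    exact ⟨x, mem_univ x, fun h => (mem_sdiff.1 h).2 hx⟩
  simpa using Finset.card_lt_card h1

lemma card_SurF_top {s F : Finset P} (hF : F ∈ filters s) :
    (SurF (s \ F) (Fintype.card P)).card = 0 :=
  card_SurF_of_lt (sdiff_card_lt hF)

lemma card_OPF_eq (n : ℕ) : ∀ s : Finset P,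
    (OPF s n).card
      = ∑ k ∈ range (Fintype.card P + 1), (SurF s k).card * n.choose k := by
  induction n with
  | zero =>
    intro s
    rw [Finset.sum_eq_single_of_mem 0 (mem_range.2 (by omega))]
    · rw [card_OPF_zero, card_SurF_zero, Nat.choose_zero_right, mul_one]
    · intro k _ hk
      rw [Nat.choose_eq_zero_of_lt (by omega), mul_zero]
  | succ n ih =>
    intro s
    have step2 : ∑ k ∈ range (Fintype.card P + 1), (SurF s k).card * (n + 1).choose k
        = (∑ k ∈ range (Fintype.card P + 1), (SurF s k).card * n.choose k)
          + ∑ j ∈ range (Fintype.card P), (SurF s (j + 1)).card * n.choose j := by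
      rw [Finset.sum_range_succ' (fun k => (SurF s k).card * (n + 1).choose k),
        Finset.sum_range_succ' (fun k => (SurF s k).card * n.choose k)]
      simp only [Nat.choose_succ_succ, Nat.choose_zero_right, Nat.mul_add]
      rw [Finset.sum_add_distrib]
      ring
    have step3 : ∑ j ∈ range (Fintype.card P), (SurF s (j + 1)).card * n.choose j
        = ∑ F ∈ filters s, (OPF (s \ F) n).card := by
      have : ∀ j ∈ range (Fintype.card P), (SurF s (j + 1)).card * n.choose j
          = ∑ F ∈ filters s, (SurF (s \ F) j).card * n.choose j := by
        intro j _
        rw [card_SurF_succ, Finset.sum_mul]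
      rw [Finset.sum_congr rfl this, Finset.sum_comm]
      refine Finset.sum_congr rfl fun F hF => ?_
      rw [ih (s \ F)]
      rw [Finset.sum_range_succ, card_SurF_top hF, zero_mul, add_zero]
    rw [card_OPF_succ', ih s, step2, step3]

/-- the admissible designated top filters for an order-preserving `f`. -/
noncomputable def adm (s : Finset P) (f : P → ℕ) : Finset (Finset P) :=
  (filters s).filter (fun F => (∀ x ∈ F, ∀ y ∈ s, f y ≤ f x) ∧
    ∀ x ∈ s \ F, ∀ y ∈ s \ F, x < y → f x < f y)

lemma mem_adm {s F : Finset P} {f : P → ℕ} :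
    F ∈ adm s f ↔ F ∈ filters s ∧ (∀ x ∈ F, ∀ y ∈ s, f y ≤ f x) ∧
      ∀ x ∈ s \ F, ∀ y ∈ s \ F, x < y → f x < f y := by
  simp [adm, mem_filter, and_assoc]

lemma sum_pow_card_powerset_eq_zero {α : Type*} {M : Finset α} (hM : M.Nonempty) :
    ∑ A ∈ M.powerset, (-1 : ℚ) ^ A.card = 0 := by
  have h := Finset.sum_powerset_neg_one_pow_card_of_nonempty hM
  calc ∑ A ∈ M.powerset, (-1 : ℚ) ^ A.card
      = ((∑ A ∈ M.powerset, (-1 : ℤ) ^ A.card : ℤ) : ℚ) := by push_cast; rfl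
    _ = 0 := by rw [h]; rfl

lemma sum_adm (s : Finset P) (hs : s.Nonempty) {n : ℕ} {f : P → ℕ} (hf : f ∈ OPF s n) :
    ∑ F ∈ adm s f, (-1 : ℚ) ^ (F.card + 1)
      = if (∀ x ∈ s, ∀ y ∈ s, x < y → f x < f y) then 1 else 0 := by
  obtain ⟨hb, hz, hord⟩ := mem_OPF.1 hf
  set T := s.filter (fun x => ∀ y ∈ s, f y ≤ f x) with hTdef
  obtain ⟨x₀, hx₀s, hx₀⟩ := Finset.exists_max_image s f hs
  have hTne : T.Nonempty := ⟨x₀, mem_filter.2 ⟨hx₀s, hx₀⟩⟩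
  have hTs : T ⊆ s := filter_subset _ _
  have hTmax : ∀ x ∈ T, ∀ y ∈ s, f y ≤ f x := fun x hx => (mem_filter.1 hx).2
  have hTmem : ∀ x ∈ s, (∀ y ∈ s, f y ≤ f x) → x ∈ T := fun x hx h => mem_filter.2 ⟨hx, h⟩
  have hTval : ∀ x ∈ T, ∀ y ∈ T, f x = f y := fun x hx y hy =>
    le_antisymm (hTmax y hy x (hTs hx)) (hTmax x hx y (hTs hy))
  have hadmT : ∀ F ∈ adm s f, F ⊆ T := by
    intro F hF x hx
    obtain ⟨hF1, hF2, -⟩ := mem_adm.1 hF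
    exact hTmem x ((mem_filters.1 hF1).1 hx) (fun y hy => hF2 x hx y hy)
  by_cases hbad : ∃ x ∈ s, ∃ y ∈ s, x < y ∧ f x = f y ∧ x ∉ T
  · obtain ⟨x, hxs, y, hys, hxy, hfeq, hxT⟩ := hbad
    have hadm : adm s f = ∅ := by
      rw [eq_empty_iff_forall_notMem]
      intro F hF
      obtain ⟨hF1, hFmax, hFstrict⟩ := mem_adm.1 hF
      have hxF : x ∉ F := fun h => hxT (hadmT F hF h)
      have hyT : y ∉ T := by
        intro hyT
        exact hxT (hTmem x hxs (fun z hz => hfeq ▸ hTmax y hyT z hz))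
      have hyF : y ∉ F := fun h => hyT (hadmT F hF h)
      have := hFstrict x (mem_sdiff.2 ⟨hxs, hxF⟩) y (mem_sdiff.2 ⟨hys, hyF⟩) hxy
      omega
    rw [hadm, Finset.sum_empty, if_neg]
    intro hstrict
    have := hstrict x hxs y hys hxy
    omega
  · push_neg at hbad
    -- hbad : ∀ x ∈ s, ∀ y ∈ s, x < y → f x = f y → x ∈ T
    set M := T.filter (fun x => ∀ y ∈ T, ¬ y < x) with hMdef
    obtain ⟨m, hmT, hm⟩ : ∃ m ∈ T, ∀ y ∈ T, ¬ y < m := by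
      obtain ⟨m, hm⟩ := Finset.exists_minimal hTne
      exact ⟨m, hm.1, fun y hy hlt => hm.not_lt hy hlt⟩
    have hMne : M.Nonempty := ⟨m, mem_filter.2 ⟨hmT, hm⟩⟩
    have hMT : M ⊆ T := filter_subset _ _
    have hMmin : ∀ x ∈ M, ∀ y ∈ T, ¬ y < x := fun x hx => (mem_filter.1 hx).2
    -- characterization of adm
    have hadm_eq : adm s f = (M.powerset.filter (· ≠ T)).image (fun A => T \ A) := by
      ext F
      constructor
      · intro hF
        obtain ⟨hF1, hFmax, hFstrict⟩ := mem_adm.1 hF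
        obtain ⟨hFs, hFne, hFup⟩ := mem_filters.1 hF1
        have hFT : F ⊆ T := hadmT F hF
        rw [Finset.mem_image]
        refine ⟨T \ F, ?_, ?_⟩
        · rw [Finset.mem_filter, Finset.mem_powerset]
          constructor
          · -- T \ F ⊆ M
            intro x hx
            obtain ⟨hxT, hxF⟩ := mem_sdiff.1 hx
            refine mem_filter.2 ⟨hxT, fun y hyT hylt => ?_⟩
            have hyF : y ∉ F := fun h => hxF (hFup y h x (hTs hxT) hylt)
            have := hFstrict y (mem_sdiff.2 ⟨hTs hyT, hyF⟩) x (mem_sdiff.2 ⟨hTs hxT, hxF⟩) hylt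
            have := hTval y hyT x hxT
            omega
          · -- T \ F ≠ T
            obtain ⟨x, hxF⟩ := hFne
            intro h
            have hx' : x ∈ T := hFT hxF
            rw [← h] at hx'
            exact (mem_sdiff.1 hx').2 hxF
        · rw [sdiff_sdiff_right_self]
          exact Finset.inter_eq_right.2 hFT
      · intro hF
        rw [Finset.mem_image] at hF
        obtain ⟨A, hA, rfl⟩ := hF
        rw [Finset.mem_filter, Finset.mem_powerset] at hA
        obtain ⟨hAM, hAT⟩ := hA
        have hAsubT : A ⊆ T := hAM.trans hMT
        have hTAne : (T \ A).Nonempty := by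
          rw [Finset.sdiff_nonempty]
          intro h
          exact hAT (subset_antisymm hAsubT h)
        rw [mem_adm]
        refine ⟨mem_filters.2 ⟨(sdiff_subset).trans hTs, hTAne, ?_⟩, ?_, ?_⟩
        · -- up-set
          intro x hx y hy hxy
          obtain ⟨hxT, hxA⟩ := mem_sdiff.1 hx
          have h1 : f x ≤ f y := hord x (hTs hxT) y hy hxy
          have h2 : f y ≤ f x := hTmax x hxT y hy
          have hyT : y ∈ T := hTmem y hy (fun z hz => le_trans (hTmax x hxT z hz) h1)
          refine mem_sdiff.2 ⟨hyT, fun hyA => ?_⟩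
          exact hMmin y (hAM hyA) x hxT hxy
        · intro x hx y hy
          exact hTmax x (mem_sdiff.1 hx).1 y hy
        · -- strict outside
          intro x hx y hy hxy
          obtain ⟨hxs', hxTA⟩ := mem_sdiff.1 hx
          obtain ⟨hys', hyTA⟩ := mem_sdiff.1 hy
          have h1 : f x ≤ f y := hord x hxs' y hys' hxy
          rcases lt_or_eq_of_le h1 with h | h
          · exact h
          · exfalso
            have hxT : x ∈ T := hbad x hxs' y hys' hxy h
            have hyT : y ∈ T := hTmem y hys' (fun z hz => h ▸ hTmax x hxT z hz)
            have hyA : y ∈ A := by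
              by_contra hyA
              exact hyTA (mem_sdiff.2 ⟨hyT, hyA⟩)
            exact hMmin y (hAM hyA) x hxT hxy
    rw [hadm_eq]
    rw [Finset.sum_image (by
      intro A hA A' hA' hAeq
      rw [Finset.mem_coe, Finset.mem_filter, Finset.mem_powerset] at hA hA'
      have h1 : A ⊆ T := hA.1.trans hMT
      have h2 : A' ⊆ T := hA'.1.trans hMT
      have := congrArg (fun B => T \ B) hAeq
      simpa [sdiff_sdiff_right_self, Finset.inter_eq_right.2 h1,
        Finset.inter_eq_right.2 h2] using this)]
    by_cases hTM : T ⊆ M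
    · -- T is an antichain; answer 1
      have hMeqT : M = T := subset_antisymm hMT hTM
      have hsplit :
          ∑ A ∈ M.powerset.filter (· ≠ T), (-1:ℚ)^((T \ A).card + 1)
            = (∑ A ∈ M.powerset, (-1:ℚ)^((T \ A).card + 1)) - (-1:ℚ)^((T \ T).card + 1) := by
        have hTmem' : T ∈ M.powerset := by rw [hMeqT]; exact Finset.mem_powerset_self T
        rw [← Finset.sum_erase_add M.powerset _ hTmem']
        have : M.powerset.filter (· ≠ T) = M.powerset.erase T := by
          ext A
          rw [Finset.mem_filter, Finset.mem_erase]
          tauto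
        rw [this]
        ring
      rw [hsplit]
      have hbij : ∑ A ∈ M.powerset, (-1:ℚ)^((T \ A).card + 1)
          = ∑ B ∈ T.powerset, (-1:ℚ)^(B.card + 1) := by
        rw [hMeqT]
        refine Finset.sum_nbij' (fun A => T \ A) (fun B => T \ B) ?_ ?_ ?_ ?_ ?_
        · intro A hA
          exact Finset.mem_powerset.2 sdiff_subset
        · intro B hB
          exact Finset.mem_powerset.2 sdiff_subset
        · intro A hA
          rw [Finset.mem_powerset] at hA
          rw [sdiff_sdiff_right_self]
          exact Finset.inter_eq_right.2 hA
        · intro B hB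
          rw [Finset.mem_powerset] at hB
          rw [sdiff_sdiff_right_self]
          exact Finset.inter_eq_right.2 hB
        · intro A hA
          rfl
      rw [hbij]
      have hzero : ∑ B ∈ T.powerset, (-1:ℚ)^(B.card + 1) = 0 := by
        have : ∀ B ∈ T.powerset, (-1:ℚ)^(B.card + 1) = (-1:ℚ)^B.card * (-1) := by
          intro B _; rw [pow_succ]
        rw [Finset.sum_congr rfl this, ← Finset.sum_mul,
          sum_pow_card_powerset_eq_zero hTne, zero_mul]
      rw [hzero]
      have hstrict : ∀ x ∈ s, ∀ y ∈ s, x < y → f x < f y := by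
        intro x hx y hy hxy
        have h1 : f x ≤ f y := hord x hx y hy hxy
        rcases lt_or_eq_of_le h1 with h | h
        · exact h
        · exfalso
          have hxT : x ∈ T := hbad x hx y hy hxy h
          have hyT : y ∈ T := hTmem y hy (fun z hz => h ▸ hTmax x hxT z hz)
          exact hMmin y (hTM hyT) x hxT hxy
      rw [if_pos hstrict]
      simp
    · -- T is not an antichain; answer 0
      have hfilter_all : M.powerset.filter (· ≠ T) = M.powerset := by
        apply Finset.filter_true_of_mem
        intro A hA
        rw [Finset.mem_powerset] at hA
        intro h
        exact hTM (h ▸ hA)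
      rw [hfilter_all]
      have hsign : ∀ A ∈ M.powerset, (-1:ℚ)^((T \ A).card + 1)
          = (-1:ℚ)^(T.card + 1) * (-1:ℚ)^A.card := by
        intro A hA
        have hAT : A ⊆ T := (Finset.mem_powerset.1 hA).trans hMT
        have hcard : A.card ≤ T.card := Finset.card_le_card hAT
        have hc : (T \ A).card + A.card = T.card := by
          rw [Finset.card_sdiff_of_subset hAT]; omega
        have hexp : ((T \ A).card + 1) + A.card = T.card + 1 := by omega
        have h2 : (-1:ℚ)^A.card * (-1:ℚ)^A.card = 1 := by
          rw [← pow_add]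
          exact Even.neg_one_pow ⟨A.card, rfl⟩
        calc (-1:ℚ)^((T \ A).card + 1)
            = (-1:ℚ)^((T \ A).card + 1) * ((-1:ℚ)^A.card * (-1:ℚ)^A.card) := by
              rw [h2, mul_one]
          _ = ((-1:ℚ)^((T \ A).card + 1) * (-1:ℚ)^A.card) * (-1:ℚ)^A.card := by ring
          _ = (-1:ℚ)^(T.card + 1) * (-1:ℚ)^A.card := by rw [← pow_add, hexp]
      rw [Finset.sum_congr rfl hsign, ← Finset.mul_sum,
        sum_pow_card_powerset_eq_zero hMne, mul_zero]
      rw [if_neg]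
      intro hstrict
      obtain ⟨w, hwT, hwM⟩ := Finset.not_subset.1 hTM
      have hnotmin : ¬ ∀ y ∈ T, ¬ y < w := fun h => hwM (mem_filter.2 ⟨hwT, h⟩)
      push_neg at hnotmin
      obtain ⟨y, hyT, hylt⟩ := hnotmin
      have h1 := hstrict y (hTs hyT) w (hTs hwT) hylt
      have h2 := hTval y hyT w hwT
      omega

lemma card_SPF_rec (s : Finset P) (hs : s.Nonempty) (n : ℕ) :
    ((SPF s n).card : ℚ)
      = ∑ F ∈ filters s, (-1:ℚ)^(F.card + 1)
          * ∑ v ∈ Finset.Icc 1 n, ((SPF (s \ F) v).card : ℚ) := by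
  have himg : ∀ f : P → ℕ, (s.image f).Nonempty := fun f => hs.image f
  set tv : (P → ℕ) → ℕ := fun f => (s.image f).max' (himg f) with htv
  have htv_ub : ∀ (f : P → ℕ), ∀ y ∈ s, f y ≤ tv f := by
    intro f y hy
    exact Finset.le_max' _ _ (Finset.mem_image_of_mem f hy)
  have htv_mem : ∀ f : P → ℕ, ∃ x ∈ s, f x = tv f := by
    intro f
    have := Finset.max'_mem (s.image f) (himg f)
    rw [Finset.mem_image] at this
    exact this
  have htv_eq : ∀ (f : P → ℕ) (v : ℕ), (∃ x ∈ s, f x = v) → (∀ y ∈ s, f y ≤ v) → tv f = v := by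
    rintro f v ⟨x, hx, hfx⟩ hub
    refine le_antisymm (Finset.max'_le _ _ _ ?_) (hfx ▸ htv_ub f x hx)
    intro b hb
    rw [Finset.mem_image] at hb
    obtain ⟨y, hy, rfl⟩ := hb
    exact hub y hy
  -- rewrite LHS as a sum over pairs
  have hLHS : ((SPF s n).card : ℚ)
      = ∑ q ∈ (OPF s n).sigma (fun f => adm s f), (-1:ℚ)^(q.2.card + 1) := by
    rw [Finset.sum_sigma]
    rw [SPF_eq_filter, Finset.card_filter]
    push_cast
    refine Finset.sum_congr rfl fun f hf => ?_
    rw [sum_adm s hs hf]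
  -- rewrite RHS as a sum over triples
  have hRHS : (∑ F ∈ filters s, (-1:ℚ)^(F.card + 1)
          * ∑ v ∈ Finset.Icc 1 n, ((SPF (s \ F) v).card : ℚ))
      = ∑ p ∈ (filters s).sigma (fun F => (Finset.Icc 1 n).sigma (fun v => SPF (s \ F) v)),
          (-1:ℚ)^(p.1.card + 1) := by
    rw [Finset.sum_sigma]
    refine Finset.sum_congr rfl fun F hF => ?_
    rw [Finset.sum_sigma, Finset.mul_sum]
    refine Finset.sum_congr rfl fun v hv => ?_
    dsimp only
    rw [Finset.sum_const, nsmul_eq_mul]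
    ring
  rw [hLHS, hRHS]
  refine Finset.sum_nbij'
    (fun q => (⟨q.2, tv q.1, fun x => if x ∈ q.2 then 0 else q.1 x⟩ :
        Σ _ : Finset P, Σ _ : ℕ, (P → ℕ)))
    (fun p => (⟨fun x => if x ∈ p.1 then p.2.1 else p.2.2 x, p.1⟩ :
        Σ _ : P → ℕ, Finset P)) ?_ ?_ ?_ ?_ ?_
  · -- forward membership
    rintro ⟨f, F⟩ hq
    rw [Finset.mem_sigma] at hq
    obtain ⟨hf, hFadm⟩ := hq
    dsimp only at hf hFadm ⊢
    obtain ⟨hFfil, hFmax, hFstrict⟩ := mem_adm.1 hFadm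
    obtain ⟨hFs, hFne, hFup⟩ := mem_filters.1 hFfil
    obtain ⟨hb, hz, hord⟩ := mem_OPF.1 hf
    rw [Finset.mem_sigma]
    constructor
    · exact hFfil
    · rw [Finset.mem_sigma]
      try dsimp only
      constructor
      · obtain ⟨x₀, hx₀, hfx₀⟩ := htv_mem f
        rw [Finset.mem_Icc]
        have h := hb x₀ hx₀
        exact ⟨hfx₀ ▸ h.1, hfx₀ ▸ h.2⟩
      · rw [mem_SPF]
        try dsimp only
        refine ⟨?_, ?_, ?_⟩
        · intro x hx
          obtain ⟨hxs, hxF⟩ := mem_sdiff.1 hx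
          rw [if_neg hxF]
          exact ⟨(hb x hxs).1, htv_ub f x hxs⟩
        · intro x hx
          by_cases hxF : x ∈ F
          · rw [if_pos hxF]
          · rw [if_neg hxF]
            exact hz x (fun hxs => hx (mem_sdiff.2 ⟨hxs, hxF⟩))
        · intro x hx y hy hxy
          obtain ⟨hxs, hxF⟩ := mem_sdiff.1 hx
          obtain ⟨hys, hyF⟩ := mem_sdiff.1 hy
          rw [if_neg hxF, if_neg hyF]
          exact hFstrict x hx y hy hxy
  · -- backward membership
    rintro ⟨F, v, g⟩ hp
    rw [Finset.mem_sigma] at hp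
    obtain ⟨hF, hp2⟩ := hp
    rw [Finset.mem_sigma] at hp2
    obtain ⟨hv, hg⟩ := hp2
    dsimp only at hF hv hg ⊢
    obtain ⟨hFs, hFne, hFup⟩ := mem_filters.1 hF
    rw [Finset.mem_Icc] at hv
    obtain ⟨hgb, hgz, hgstrict⟩ := mem_SPF.1 hg
    have hub : ∀ y ∈ s, (if y ∈ F then v else g y) ≤ v := by
      intro y hy
      by_cases hyF : y ∈ F
      · rw [if_pos hyF]
      · rw [if_neg hyF]
        exact (hgb y (mem_sdiff.2 ⟨hy, hyF⟩)).2
    rw [Finset.mem_sigma]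
    constructor
    · rw [mem_OPF]
      try dsimp only
      refine ⟨?_, ?_, ?_⟩
      · intro x hx
        refine ⟨?_, le_trans (hub x hx) hv.2⟩
        by_cases hxF : x ∈ F
        · rw [if_pos hxF]; exact hv.1
        · rw [if_neg hxF]
          exact (hgb x (mem_sdiff.2 ⟨hx, hxF⟩)).1
      · intro x hx
        have hxF : x ∉ F := fun h => hx (hFs h)
        rw [if_neg hxF]
        exact hgz x (fun h => hx (mem_sdiff.1 h).1)
      · intro x hx y hy hxy
        by_cases hyF : y ∈ F
        · rw [if_pos hyF]
          exact hub x hx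
        · have hxF : x ∉ F := fun h => hyF (hFup x h y hy hxy)
          rw [if_neg hxF, if_neg hyF]
          exact (hgstrict x (mem_sdiff.2 ⟨hx, hxF⟩) y (mem_sdiff.2 ⟨hy, hyF⟩) hxy).le
    · rw [mem_adm]
      try dsimp only
      refine ⟨hF, ?_, ?_⟩
      · intro x hx y hy
        rw [if_pos hx]
        exact hub y hy
      · intro x hx y hy hxy
        obtain ⟨hxs, hxF⟩ := mem_sdiff.1 hx
        obtain ⟨hys, hyF⟩ := mem_sdiff.1 hy
        rw [if_neg hxF, if_neg hyF]
        exact hgstrict x hx y hy hxy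
  · -- left inverse
    rintro ⟨f, F⟩ hq
    rw [Finset.mem_sigma] at hq
    obtain ⟨hf, hFadm⟩ := hq
    dsimp only at hf hFadm ⊢
    obtain ⟨hFfil, hFmax, hFstrict⟩ := mem_adm.1 hFadm
    obtain ⟨hFs, hFne, hFup⟩ := mem_filters.1 hFfil
    have hfun : (fun x => if x ∈ F then tv f else if x ∈ F then 0 else f x) = f := by
      funext x
      by_cases hxF : x ∈ F
      · rw [if_pos hxF]
        exact (htv_eq f (f x) ⟨x, hFs hxF, rfl⟩ (fun y hy => hFmax x hxF y hy))
      · rw [if_neg hxF, if_neg hxF]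
    exact Sigma.ext hfun (heq_of_eq rfl)
  · -- right inverse
    rintro ⟨F, v, g⟩ hp
    rw [Finset.mem_sigma] at hp
    obtain ⟨hF, hp2⟩ := hp
    rw [Finset.mem_sigma] at hp2
    obtain ⟨hv, hg⟩ := hp2
    dsimp only at hF hv hg ⊢
    obtain ⟨hFs, hFne, hFup⟩ := mem_filters.1 hF
    obtain ⟨hgb, hgz, hgstrict⟩ := mem_SPF.1 hg
    have htveq : tv (fun x => if x ∈ F then v else g x) = v := by
      apply htv_eq
      · obtain ⟨x, hxF⟩ := hFne
        exact ⟨x, hFs hxF, by rw [if_pos hxF]⟩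
      · intro y hy
        by_cases hyF : y ∈ F
        · rw [if_pos hyF]
        · rw [if_neg hyF]
          exact (hgb y (mem_sdiff.2 ⟨hy, hyF⟩)).2
    have hgeq : (fun x => if x ∈ F then 0 else if x ∈ F then v else g x) = g := by
      funext x
      by_cases hxF : x ∈ F
      · rw [if_pos hxF]
        exact (hgz x (fun h => (mem_sdiff.1 h).2 hxF)).symm
      · rw [if_neg hxF, if_neg hxF]
    exact Sigma.ext rfl (heq_of_eq (Sigma.ext htveq (heq_of_eq hgeq)))
  · -- weights agree
    rintro ⟨f, F⟩ _
    rfl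

lemma neg_one_sq_pow (c : ℕ) : (-1:ℚ)^c * (-1:ℚ)^c = 1 := by
  rw [← pow_add]
  exact Even.neg_one_pow ⟨c, rfl⟩

lemma key (s : Finset P) : ∀ n : ℕ,
    ((SPF s n).card : ℚ)
      = (-1:ℚ)^s.card * ∑ k ∈ range (Fintype.card P + 1),
          ((SurF s k).card : ℚ) * (bin k).eval (-(n:ℚ)) := by
  induction s using Finset.strongInductionOn with
  | _ s ih =>
  intro n
  rcases s.eq_empty_or_nonempty with rfl | hs
  · rw [SPF_empty, card_singleton]
    rw [Finset.sum_eq_single_of_mem 0 (mem_range.2 (by omega))]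
    · rw [card_SurF_zero, if_pos rfl, bin_zero]
      simp
    · intro k _ hkne
      rw [card_SurF_of_lt (by simpa using Nat.pos_of_ne_zero hkne)]
      simp
  · have hstep1 : ∑ k ∈ range (Fintype.card P + 1),
        ((SurF s k).card : ℚ) * (bin k).eval (-(n:ℚ))
        = ∑ j ∈ range (Fintype.card P),
            ((SurF s (j + 1)).card : ℚ) * (bin (j + 1)).eval (-(n:ℚ)) := by
      rw [Finset.sum_range_succ']
      rw [card_SurF_zero_of_nonempty hs]
      simp
    have hper : ∀ F ∈ filters s,
        (-1:ℚ)^s.card * ∑ j ∈ range (Fintype.card P),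
            ((SurF (s \ F) j).card : ℚ) * (-(∑ v ∈ Finset.Icc 1 n, (bin j).eval (-(v:ℚ))))
          = (-1:ℚ)^(F.card + 1) * ∑ v ∈ Finset.Icc 1 n, ((SPF (s \ F) v).card : ℚ) := by
      intro F hF
      obtain ⟨hFs, hFne, -⟩ := mem_filters.1 hF
      have hss : s \ F ⊂ s := Finset.sdiff_ssubset hFs hFne
      have hc : (s \ F).card + F.card = s.card := Finset.card_sdiff_add_card_eq_card hFs
      have hB : ∀ v : ℕ, ∑ j ∈ range (Fintype.card P),
          ((SurF (s \ F) j).card : ℚ) * (bin j).eval (-(v:ℚ))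
          = (-1:ℚ)^(s \ F).card * ((SPF (s \ F) v).card : ℚ) := by
        intro v
        have hext : ∑ j ∈ range (Fintype.card P + 1),
            ((SurF (s \ F) j).card : ℚ) * (bin j).eval (-(v:ℚ))
            = ∑ j ∈ range (Fintype.card P),
            ((SurF (s \ F) j).card : ℚ) * (bin j).eval (-(v:ℚ)) := by
          rw [Finset.sum_range_succ, card_SurF_top hF]
          simp
        rw [← hext]
        have hIH := ih (s \ F) hss v
        rw [hIH, ← mul_assoc, neg_one_sq_pow, one_mul]
      have hswap : ∑ j ∈ range (Fintype.card P),
          ((SurF (s \ F) j).card : ℚ) * (-(∑ v ∈ Finset.Icc 1 n, (bin j).eval (-(v:ℚ))))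
          = -∑ v ∈ Finset.Icc 1 n, ∑ j ∈ range (Fintype.card P),
              ((SurF (s \ F) j).card : ℚ) * (bin j).eval (-(v:ℚ)) := by
        have h1 : ∀ j ∈ range (Fintype.card P),
            ((SurF (s \ F) j).card : ℚ) * (-(∑ v ∈ Finset.Icc 1 n, (bin j).eval (-(v:ℚ))))
              = -(∑ v ∈ Finset.Icc 1 n,
                  ((SurF (s \ F) j).card : ℚ) * (bin j).eval (-(v:ℚ))) := by
          intro j _
          rw [mul_neg, Finset.mul_sum]
        rw [Finset.sum_congr rfl h1, Finset.sum_neg_distrib, Finset.sum_comm]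
      rw [hswap]
      have hBsum : ∑ v ∈ Finset.Icc 1 n, ∑ j ∈ range (Fintype.card P),
          ((SurF (s \ F) j).card : ℚ) * (bin j).eval (-(v:ℚ))
          = (-1:ℚ)^(s \ F).card * ∑ v ∈ Finset.Icc 1 n, ((SPF (s \ F) v).card : ℚ) := by
        rw [Finset.mul_sum]
        exact Finset.sum_congr rfl fun v _ => hB v
      rw [hBsum]
      have h2 := neg_one_sq_pow (s \ F).card
      calc (-1:ℚ)^s.card * -((-1:ℚ)^(s \ F).card
              * ∑ v ∈ Finset.Icc 1 n, ((SPF (s \ F) v).card : ℚ))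
          = ((-1:ℚ)^(s \ F).card * (-1:ℚ)^F.card) * -((-1:ℚ)^(s \ F).card
              * ∑ v ∈ Finset.Icc 1 n, ((SPF (s \ F) v).card : ℚ)) := by
            rw [← pow_add, hc]
        _ = ((-1:ℚ)^(s \ F).card * (-1:ℚ)^(s \ F).card)
              * -((-1:ℚ)^F.card * ∑ v ∈ Finset.Icc 1 n, ((SPF (s \ F) v).card : ℚ)) := by
            ring
        _ = -((-1:ℚ)^F.card * ∑ v ∈ Finset.Icc 1 n, ((SPF (s \ F) v).card : ℚ)) := by
            rw [h2, one_mul]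
        _ = (-1:ℚ)^(F.card + 1) * ∑ v ∈ Finset.Icc 1 n, ((SPF (s \ F) v).card : ℚ) := by
            rw [pow_succ]
            ring
    rw [hstep1]
    have hterm : ∀ j ∈ range (Fintype.card P),
        ((SurF s (j + 1)).card : ℚ) * (bin (j + 1)).eval (-(n:ℚ))
        = ∑ F ∈ filters s,
            ((SurF (s \ F) j).card : ℚ) * (-(∑ v ∈ Finset.Icc 1 n, (bin j).eval (-(v:ℚ)))) := by
      intro j _
      rw [bin_eval_neg]
      have hcast : ((SurF s (j + 1)).card : ℚ)
          = ∑ F ∈ filters s, ((SurF (s \ F) j).card : ℚ) := by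
        rw [card_SurF_succ s j]
        push_cast
        rfl
      rw [hcast, Finset.sum_mul]
    rw [Finset.sum_congr rfl hterm, Finset.sum_comm, Finset.mul_sum]
    rw [Finset.sum_congr rfl hper]
    exact card_SPF_rec s hs n

lemma bridge_le (n : ℕ) :
    Nat.card {f : P → Fin n // ∀ x y : P, x < y → f x ≤ f y}
      = (OPF (univ : Finset P) n).card := by
  rw [← Nat.card_eq_finsetCard]
  apply Nat.card_congr
  refine
    { toFun := fun f => ⟨fun x => (f.1 x).val + 1, ?_⟩
      invFun := fun g => ⟨fun x => ⟨g.1 x - 1, ?_⟩, ?_⟩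
      left_inv := ?_
      right_inv := ?_ }
  · rw [mem_OPF]
    refine ⟨fun x _ => ⟨by omega, by have := (f.1 x).isLt; omega⟩,
      fun x hx => absurd (mem_univ x) hx, fun x _ y _ hxy => ?_⟩
    have := f.2 x y hxy
    simp only [Fin.le_def] at this
    omega
  · have := (mem_OPF.1 g.2).1 x (mem_univ x)
    omega
  · intro x y hxy
    have h1 := (mem_OPF.1 g.2).1 x (mem_univ x)
    have h2 := (mem_OPF.1 g.2).1 y (mem_univ y)
    have h3 := (mem_OPF.1 g.2).2.2 x (mem_univ x) y (mem_univ y) hxy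
    simp only [Fin.le_def]
    omega
  · intro f
    apply Subtype.ext
    funext x
    apply Fin.ext
    simp
  · intro g
    apply Subtype.ext
    funext x
    have := (mem_OPF.1 g.2).1 x (mem_univ x)
    simp only
    omega

lemma bridge_lt (n : ℕ) :
    Nat.card {f : P → Fin n // ∀ x y : P, x < y → f x < f y}
      = (SPF (univ : Finset P) n).card := by
  rw [← Nat.card_eq_finsetCard]
  apply Nat.card_congr
  refine
    { toFun := fun f => ⟨fun x => (f.1 x).val + 1, ?_⟩
      invFun := fun g => ⟨fun x => ⟨g.1 x - 1, ?_⟩, ?_⟩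
      left_inv := ?_
      right_inv := ?_ }
  · rw [mem_SPF]
    refine ⟨fun x _ => ⟨by omega, by have := (f.1 x).isLt; omega⟩,
      fun x hx => absurd (mem_univ x) hx, fun x _ y _ hxy => ?_⟩
    have := f.2 x y hxy
    simp only [Fin.lt_def] at this
    omega
  · have := (mem_SPF.1 g.2).1 x (mem_univ x)
    omega
  · intro x y hxy
    have h1 := (mem_SPF.1 g.2).1 x (mem_univ x)
    have h2 := (mem_SPF.1 g.2).1 y (mem_univ y)
    have h3 := (mem_SPF.1 g.2).2.2 x (mem_univ x) y (mem_univ y) hxy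
    simp only [Fin.lt_def]
    omega
  · intro f
    apply Subtype.ext
    funext x
    apply Fin.ext
    simp
  · intro g
    apply Subtype.ext
    funext x
    have := (mem_SPF.1 g.2).1 x (mem_univ x)
    simp only
    omega


end StanleyRec

open StanleyRec Finset Polynomial in
/-- Stanley's reciprocity for order polynomials: if `Ole` is the order polynomial of a finite
poset `P` (counting order-preserving maps `P → [n]` for `n ≥ 1`) and `Olt` the strict order
polynomial (counting strictly order-preserving maps `P → [n]` for `n ≥ 1`), then
`Ω^<(P, t) = (-1)^{|P|} · Ω^≤(P, -t)` as polynomials. -/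
theorem stmt_0 (P : Type) [Fintype P] [PartialOrder P]
    (Ole Olt : Polynomial ℚ)
    (hle : ∀ n : ℕ, 1 ≤ n →
      Ole.eval (n : ℚ) = Nat.card {f : P → Fin n // ∀ x y : P, x < y → f x ≤ f y})
    (hlt : ∀ n : ℕ, 1 ≤ n →
      Olt.eval (n : ℚ) = Nat.card {f : P → Fin n // ∀ x y : P, x < y → f x < f y}) :
    Olt = (-1 : Polynomial ℚ) ^ (Fintype.card P) * Ole.comp (-Polynomial.X) := by
  have hOle : Ole = ∑ k ∈ range (Fintype.card P + 1),
      Polynomial.C (((SurF (univ : Finset P) k).card : ℚ)) * bin k := by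
    apply poly_ext
    intro n hn
    rw [hle n hn, bridge_le n, card_OPF_eq n univ]
    rw [Polynomial.eval_finset_sum]
    push_cast
    refine Finset.sum_congr rfl fun k _ => ?_
    rw [Polynomial.eval_mul, Polynomial.eval_C, bin_eval_nat]
  apply poly_ext
  intro n hn
  rw [hlt n hn, bridge_lt n]
  have hk := key (univ : Finset P) n
  rw [Finset.card_univ] at hk
  rw [hk]
  rw [Polynomial.eval_mul, Polynomial.eval_pow, Polynomial.eval_comp]
  simp only [Polynomial.eval_neg, Polynomial.eval_one, Polynomial.eval_X]
  congr 1
  rw [hOle, Polynomial.eval_finset_sum]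
  refine Finset.sum_congr rfl fun k _ => ?_
  rw [Polynomial.eval_mul, Polynomial.eval_C]
end

section
/- Let G be a finite oriented multigraph and A a finite abelian group of order k. Then the number of nowhere-zero A-flows on G equals φ_G(k), where φ_G is the flow polynomial, characterized by: φ_G = 1 if E = ∅; φ_G(t) = (t-1)·φ_{G\e}(t) if e is a loop; φ_G(t) = 0 if G has a coloop; φ_G(t) = φ_{G/e}(t) - φ_{G\e}(t) if e is neither a loop nor a coloop. In particular the count depends only on |A|, not on the group structure. -/
/-- A finite oriented multigraph: vertex and edge sets with head and tail maps. -/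
structure Multigraph where
  V : Type
  E : Type
  finV : Finite V
  finE : Finite E
  hd : E → V
  tl : E → V

/-- `f` is an `A`-flow on `G`: at each vertex the sum of the values on incoming edges
equals the sum on outgoing edges. -/
def Multigraph.IsFlow (G : Multigraph) {A : Type} [AddCommGroup A] (f : G.E → A) : Prop :=
  ∀ v : G.V, ∑ᶠ e ∈ {e : G.E | G.hd e = v}, f e = ∑ᶠ e ∈ {e : G.E | G.tl e = v}, f e

/-- Deletion of the edge `e₀`. -/
def Multigraph.del (G : Multigraph) (e₀ : G.E) : Multigraph where
  V := G.V
  E := {e : G.E // e ≠ e₀}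
  finV := G.finV
  finE := by haveI := G.finE; infer_instance
  hd := fun e => G.hd e.1
  tl := fun e => G.tl e.1

/-- Contraction of the edge `e₀`: the endpoints of `e₀` are identified and `e₀` removed. -/
def Multigraph.contract (G : Multigraph) (e₀ : G.E) : Multigraph where
  V := Quot (fun a b : G.V => a = G.hd e₀ ∧ b = G.tl e₀)
  E := {e : G.E // e ≠ e₀}
  finV := by haveI := G.finV; infer_instance
  finE := by haveI := G.finE; infer_instance
  hd := fun e => Quot.mk _ (G.hd e.1)
  tl := fun e => Quot.mk _ (G.tl e.1)

/-- The number of connected components `b₀(G)`. -/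
noncomputable def Multigraph.b0 (G : Multigraph) : ℕ :=
  Nat.card (Quot (fun a b : G.V =>
    ∃ e : G.E, (G.hd e = a ∧ G.tl e = b) ∨ (G.hd e = b ∧ G.tl e = a)))

/-- `e₀` is a loop. -/
def Multigraph.IsLoop (G : Multigraph) (e₀ : G.E) : Prop := G.hd e₀ = G.tl e₀

/-- `e₀` is a coloop (bridge): deleting it increases the number of components. -/
def Multigraph.IsColoop (G : Multigraph) (e₀ : G.E) : Prop :=
  (G.del e₀).b0 = G.b0 + 1

-- ### auxiliary development
open scoped Classical

namespace FlowAux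

instance (G : Multigraph) : Finite G.V := G.finV
instance (G : Multigraph) : Finite G.E := G.finE

variable {A : Type} [AddCommGroup A]

lemma finsum_setOf {E : Type} [Finite E] (p : E → Prop) (f : E → A) :
    ∑ᶠ e ∈ {e | p e}, f e = ∑ᶠ e, if p e then f e else 0 := by
  rw [finsum_mem_def]
  apply finsum_congr
  intro e
  simp [Set.indicator_apply]

lemma isFlow_iff (G : Multigraph) (f : G.E → A) :
    G.IsFlow f ↔ ∀ v : G.V,
      (∑ᶠ e, if G.hd e = v then f e else 0) = ∑ᶠ e, if G.tl e = v then f e else 0 := by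
  unfold Multigraph.IsFlow
  constructor <;> intro h v <;> have hv := h v
  · rwa [finsum_setOf, finsum_setOf] at hv
  · rwa [finsum_setOf, finsum_setOf]

lemma sum_split {E : Type} [Finite E] (g : E → A) (e₀ : E) :
    ∑ᶠ e, g e = g e₀ + ∑ᶠ e : {e : E // e ≠ e₀}, g e.1 := by
  letI : Fintype E := Fintype.ofFinite E
  rw [finsum_eq_sum_of_fintype, finsum_eq_sum_of_fintype]
  rw [← Finset.sum_subtype (Finset.univ.erase e₀) (by simp) (fun e => g e)]
  rw [Finset.add_sum_erase _ g (Finset.mem_univ e₀)]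

lemma isFlow_del_iff (G : Multigraph) (e₀ : G.E) (f : G.E → A)
    (h : ∀ v : G.V, (if G.hd e₀ = v then f e₀ else 0) = (if G.tl e₀ = v then f e₀ else 0)) :
    G.IsFlow f ↔ (G.del e₀).IsFlow (fun e => f e.1) := by
  rw [isFlow_iff, isFlow_iff]
  constructor
  · intro hf v
    have hv := hf v
    rw [sum_split (fun e => if G.hd e = v then f e else 0) e₀,
        sum_split (fun e => if G.tl e = v then f e else 0) e₀, h v] at hv
    exact add_left_cancel hv
  · intro hf v
    rw [sum_split (fun e => if G.hd e = v then f e else 0) e₀,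
        sum_split (fun e => if G.tl e = v then f e else 0) e₀, h v]
    apply congrArg
    exact hf v

def rel (G : Multigraph) : G.V → G.V → Prop := fun a b =>
  ∃ e : G.E, (G.hd e = a ∧ G.tl e = b) ∨ (G.hd e = b ∧ G.tl e = a)

lemma b0_def (G : Multigraph) : G.b0 = Nat.card (Quot (rel G)) := rfl

lemma coloop_sep (G : Multigraph) (e₀ : G.E) (h : G.IsColoop e₀) :
    Quot.mk (rel (G.del e₀)) (G.hd e₀) ≠ Quot.mk (rel (G.del e₀)) (G.tl e₀) := by
  intro hq
  have key : Nat.card (Quot (rel (G.del e₀))) = Nat.card (Quot (rel G)) := by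
    apply Nat.card_congr
    refine ⟨Quot.lift (Quot.mk (rel G)) ?_, Quot.lift (Quot.mk (rel (G.del e₀))) ?_, ?_, ?_⟩
    · rintro a b ⟨e, he⟩
      exact Quot.sound ⟨e.1, he⟩
    · rintro a b ⟨e, he⟩
      by_cases hee : e = e₀
      · subst hee
        rcases he with ⟨ha, hb⟩ | ⟨ha, hb⟩
        · rw [← ha, ← hb]; exact hq
        · rw [← ha, ← hb]; exact hq.symm
      · exact Quot.sound ⟨⟨e, hee⟩, he⟩
    · intro x; induction x using Quot.ind; rfl
    · intro x; induction x using Quot.ind; rfl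
  have h2 : Nat.card (Quot (rel (G.del e₀))) = Nat.card (Quot (rel G)) + 1 := h
  omega

lemma sum_fiber {V E : Type} [Finite V] [Finite E] (φ : E → V) (q : V → Prop) (f : E → A) :
    (∑ᶠ v, if q v then (∑ᶠ e, if φ e = v then f e else 0) else 0)
      = ∑ᶠ e, if q (φ e) then f e else 0 := by
  letI := Fintype.ofFinite V; letI := Fintype.ofFinite E
  simp only [finsum_eq_sum_of_fintype]
  have step : ∀ v, (if q v then (∑ e, if φ e = v then f e else 0) else 0)
      = ∑ e, if φ e = v then (if q v then f e else 0) else 0 := by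
    intro v
    split_ifs with h
    · rfl
    · symm; apply Finset.sum_eq_zero; intro e _; simp
  rw [Finset.sum_congr rfl fun v _ => step v, Finset.sum_comm]
  apply Finset.sum_congr rfl
  intro e _
  simp [Finset.sum_ite_eq]

lemma coloop_flow_zero (G : Multigraph) (e₀ : G.E) (hcol : G.IsColoop e₀) (f : G.E → A)
    (hf : G.IsFlow f) : f e₀ = 0 := by
  set c : G.V → Quot (rel (G.del e₀)) := Quot.mk _ with hc
  set q : G.V → Prop := fun v => c v = c (G.hd e₀) with hqdef
  have hedge : ∀ e : G.E, ∀ he : e ≠ e₀, c (G.hd e) = c (G.tl e) :=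
    fun e he => Quot.sound ⟨⟨e, he⟩, Or.inl ⟨rfl, rfl⟩⟩
  have hflow := (isFlow_iff G f).mp hf
  have hzero : (∑ᶠ e, if q (G.hd e) then f e else 0) = ∑ᶠ e, if q (G.tl e) then f e else 0 := by
    rw [← sum_fiber G.hd q f, ← sum_fiber G.tl q f]
    apply finsum_congr; intro v
    rw [hflow v]
  rw [sum_split (fun e => if q (G.hd e) then f e else 0) e₀,
      sum_split (fun e => if q (G.tl e) then f e else 0) e₀] at hzero
  have hsub : (∑ᶠ x : {e : G.E // e ≠ e₀}, if q (G.hd x.1) then f x.1 else 0)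
      = ∑ᶠ x : {e : G.E // e ≠ e₀}, if q (G.tl x.1) then f x.1 else 0 := by
    apply finsum_congr; intro x
    have : q (G.hd x.1) = q (G.tl x.1) := by simp only [hqdef]; rw [hedge x.1 x.2]
    rw [this]
  rw [hsub] at hzero
  have h1 : q (G.hd e₀) := rfl
  have h2 : ¬ q (G.tl e₀) := fun hh => coloop_sep G e₀ hcol hh.symm
  rw [if_pos h1, if_neg h2] at hzero
  simpa using add_right_cancel hzero

def crel (G : Multigraph) (e₀ : G.E) : G.V → G.V → Prop :=
  fun a b => a = G.hd e₀ ∧ b = G.tl e₀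

lemma quot_mk_eq_iff (G : Multigraph) (e₀ : G.E) (a b : G.V) :
    Quot.mk (crel G e₀) a = Quot.mk (crel G e₀) b ↔
      (a = b ∨ ((a = G.hd e₀ ∨ a = G.tl e₀) ∧ (b = G.hd e₀ ∨ b = G.tl e₀))) := by
  constructor
  · intro h
    have h' := Quot.eq.mp h
    clear h
    induction h' with
    | rel x y hxy => exact Or.inr ⟨Or.inl hxy.1, Or.inr hxy.2⟩
    | refl x => exact Or.inl rfl
    | symm x y _ ih => tauto
    | trans x y z _ _ ih1 ih2 =>
      rcases ih1 with rfl | ⟨hx, hy⟩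
      · exact ih2
      · rcases ih2 with rfl | ⟨hy', hz⟩
        · exact Or.inr ⟨hx, hy⟩
        · exact Or.inr ⟨hx, hz⟩
  · rintro (rfl | ⟨(rfl | ha), (hb | hb)⟩)
    · rfl
    · rw [hb]
    · rw [hb]; exact Quot.sound ⟨rfl, rfl⟩
    · rw [ha, hb]; exact (Quot.sound ⟨rfl, rfl⟩).symm
    · rw [ha, hb]

lemma isFlow_contract_iff (G : Multigraph) (e₀ : G.E) (g : {e : G.E // e ≠ e₀} → A) :
    (G.contract e₀).IsFlow g ↔ ∀ v : G.V,
      (∑ᶠ e : {e : G.E // e ≠ e₀},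
          if Quot.mk (crel G e₀) (G.hd e.1) = Quot.mk (crel G e₀) v then g e else 0)
        = ∑ᶠ e : {e : G.E // e ≠ e₀},
          if Quot.mk (crel G e₀) (G.tl e.1) = Quot.mk (crel G e₀) v then g e else 0 := by
  refine (isFlow_iff (G.contract e₀) g).trans ?_
  constructor
  · intro h v; exact h (Quot.mk (crel G e₀) v)
  · intro h w
    induction w using Quot.ind with
    | _ v => exact h v

lemma finsum_if_congr {E : Type} (p q : E → Prop) (f : E → A) (h : ∀ e, p e ↔ q e) :
    (∑ᶠ e, if p e then f e else 0) = ∑ᶠ e, if q e then f e else 0 :=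
  finsum_congr fun e => by simp only [show p e = q e from propext (h e)]

lemma sum_add {E : Type} [Finite E] (u w : E → A) :
    (∑ᶠ e, (u e + w e)) = (∑ᶠ e, u e) + ∑ᶠ e, w e := by
  letI := Fintype.ofFinite E
  simp [finsum_eq_sum_of_fintype, Finset.sum_add_distrib]

lemma ite_or_add (P Q : Prop) (x : A) (h : ¬(P ∧ Q)) :
    (if P then x else 0) + (if Q then x else 0) = if P ∨ Q then x else 0 := by
  split_ifs with h1 h2 h3 h2 h3 h3 <;> simp_all

lemma pred_merged (G : Multigraph) (e₀ : G.E) {v : G.V} (hv : v = G.hd e₀ ∨ v = G.tl e₀)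
    (a : G.V) : (Quot.mk (crel G e₀) a = Quot.mk (crel G e₀) v) ↔
      (a = G.hd e₀ ∨ a = G.tl e₀) := by
  rw [quot_mk_eq_iff]
  constructor
  · rintro (rfl | ⟨ha, _⟩)
    · exact hv
    · exact ha
  · intro ha; exact Or.inr ⟨ha, hv⟩

lemma pred_other (G : Multigraph) (e₀ : G.E) {v : G.V} (hv : ¬(v = G.hd e₀ ∨ v = G.tl e₀))
    (a : G.V) : (Quot.mk (crel G e₀) a = Quot.mk (crel G e₀) v) ↔ a = v := by
  rw [quot_mk_eq_iff]
  constructor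
  · rintro (rfl | ⟨_, hb⟩)
    · rfl
    · exact absurd hb hv
  · intro h; exact Or.inl h

lemma isFlow_contract_iff' (G : Multigraph) (e₀ : G.E) (g : {e : G.E // e ≠ e₀} → A) :
    (G.contract e₀).IsFlow g ↔
      ((∑ᶠ e : {e : G.E // e ≠ e₀}, if (G.hd e.1 = G.hd e₀ ∨ G.hd e.1 = G.tl e₀) then g e else 0)
          = ∑ᶠ e : {e : G.E // e ≠ e₀}, if (G.tl e.1 = G.hd e₀ ∨ G.tl e.1 = G.tl e₀) then g e else 0)
      ∧ ∀ v : G.V, ¬(v = G.hd e₀ ∨ v = G.tl e₀) →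
        (∑ᶠ e : {e : G.E // e ≠ e₀}, if G.hd e.1 = v then g e else 0)
          = ∑ᶠ e : {e : G.E // e ≠ e₀}, if G.tl e.1 = v then g e else 0 := by
  have rw1 : ∀ (φ : {e : G.E // e ≠ e₀} → G.V) (v : G.V),
      (v = G.hd e₀ ∨ v = G.tl e₀) →
      (∑ᶠ e : {e : G.E // e ≠ e₀},
          if Quot.mk (crel G e₀) (φ e) = Quot.mk (crel G e₀) v then g e else 0)
        = ∑ᶠ e : {e : G.E // e ≠ e₀}, if (φ e = G.hd e₀ ∨ φ e = G.tl e₀) then g e else 0 :=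
    fun φ v hv => finsum_congr fun e => by
      simp only [show (Quot.mk (crel G e₀) (φ e) = Quot.mk (crel G e₀) v)
        = (φ e = G.hd e₀ ∨ φ e = G.tl e₀) from propext (pred_merged G e₀ hv (φ e))]
  have rw2 : ∀ (φ : {e : G.E // e ≠ e₀} → G.V) (v : G.V),
      ¬(v = G.hd e₀ ∨ v = G.tl e₀) →
      (∑ᶠ e : {e : G.E // e ≠ e₀},
          if Quot.mk (crel G e₀) (φ e) = Quot.mk (crel G e₀) v then g e else 0)
        = ∑ᶠ e : {e : G.E // e ≠ e₀}, if φ e = v then g e else 0 :=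
    fun φ v hv => finsum_congr fun e => by
      simp only [show (Quot.mk (crel G e₀) (φ e) = Quot.mk (crel G e₀) v)
        = (φ e = v) from propext (pred_other G e₀ hv (φ e))]
  rw [isFlow_contract_iff]
  constructor
  · intro h
    constructor
    · have := h (G.hd e₀)
      rw [rw1 (fun e => G.hd e.1) _ (Or.inl rfl), rw1 (fun e => G.tl e.1) _ (Or.inl rfl)] at this
      exact this
    · intro v hv
      have := h v
      rw [rw2 (fun e => G.hd e.1) v hv, rw2 (fun e => G.tl e.1) v hv] at this
      exact this
  · rintro ⟨hm, ho⟩ v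
    by_cases hv : v = G.hd e₀ ∨ v = G.tl e₀
    · rw [rw1 (fun e => G.hd e.1) v hv, rw1 (fun e => G.tl e.1) v hv]
      exact hm
    · rw [rw2 (fun e => G.hd e.1) v hv, rw2 (fun e => G.tl e.1) v hv]
      exact ho v hv

noncomputable def extVal (G : Multigraph) (e₀ : G.E) (g : {e : G.E // e ≠ e₀} → A) : A :=
  (∑ᶠ e : {e : G.E // e ≠ e₀}, if G.tl e.1 = G.hd e₀ then g e else 0)
    - ∑ᶠ e : {e : G.E // e ≠ e₀}, if G.hd e.1 = G.hd e₀ then g e else 0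

noncomputable def extend (G : Multigraph) (e₀ : G.E) (g : {e : G.E // e ≠ e₀} → A) : G.E → A :=
  fun e => if h : e = e₀ then extVal G e₀ g else g ⟨e, h⟩

lemma extend_ne (G : Multigraph) (e₀ : G.E) (g : {e : G.E // e ≠ e₀} → A)
    (x : {e : G.E // e ≠ e₀}) : extend G e₀ g x.1 = g x := by
  simp [extend, x.2]

lemma extend_e0 (G : Multigraph) (e₀ : G.E) (g : {e : G.E // e ≠ e₀} → A) :
    extend G e₀ g e₀ = extVal G e₀ g := dif_pos rfl

lemma extend_restrict (G : Multigraph) (e₀ : G.E) (f : G.E → A) (hst : ¬ G.IsLoop e₀)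
    (hf : G.IsFlow f) : extend G e₀ (fun x => f x.1) = f := by
  funext e
  by_cases he : e = e₀
  · rw [he, extend_e0]
    have hv := (isFlow_iff G f).mp hf (G.hd e₀)
    rw [sum_split (fun e => if G.hd e = G.hd e₀ then f e else 0) e₀,
        sum_split (fun e => if G.tl e = G.hd e₀ then f e else 0) e₀] at hv
    rw [if_pos rfl, if_neg (show ¬(G.tl e₀ = G.hd e₀) from fun h => hst h.symm), zero_add] at hv
    rw [extVal, ← hv]
    abel
  · simp [extend, he]

lemma restrict_contract_flow (G : Multigraph) (e₀ : G.E) (hst : ¬ G.IsLoop e₀) (f : G.E → A)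
    (hf : G.IsFlow f) : (G.contract e₀).IsFlow (fun x : {e : G.E // e ≠ e₀} => f x.1) := by
  rw [isFlow_contract_iff']
  have hflow := (isFlow_iff G f).mp hf
  constructor
  · have key : ∀ (φ : G.E → G.V),
        (∑ᶠ e, if (φ e = G.hd e₀ ∨ φ e = G.tl e₀) then f e else 0)
        = (∑ᶠ e, if φ e = G.hd e₀ then f e else 0) + ∑ᶠ e, if φ e = G.tl e₀ then f e else 0 := by
      intro φ
      rw [← sum_add]
      exact finsum_congr fun e => (ite_or_add _ _ _ (fun h => hst (h.1.symm.trans h.2))).symm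
    have hcomb : (∑ᶠ e, if (G.hd e = G.hd e₀ ∨ G.hd e = G.tl e₀) then f e else 0)
        = ∑ᶠ e, if (G.tl e = G.hd e₀ ∨ G.tl e = G.tl e₀) then f e else 0 := by
      rw [key (fun e => G.hd e), key (fun e => G.tl e), hflow (G.hd e₀), hflow (G.tl e₀)]
    rw [sum_split (fun e => if (G.hd e = G.hd e₀ ∨ G.hd e = G.tl e₀) then f e else 0) e₀,
        sum_split (fun e => if (G.tl e = G.hd e₀ ∨ G.tl e = G.tl e₀) then f e else 0) e₀,
        if_pos (Or.inl rfl), if_pos (Or.inr rfl)] at hcomb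
    exact add_left_cancel hcomb
  · intro v hv
    have hvv := hflow v
    rw [sum_split (fun e => if G.hd e = v then f e else 0) e₀,
        sum_split (fun e => if G.tl e = v then f e else 0) e₀,
        if_neg (show ¬(G.hd e₀ = v) from fun h => hv (Or.inl h.symm)),
        if_neg (show ¬(G.tl e₀ = v) from fun h => hv (Or.inr h.symm)),
        zero_add, zero_add] at hvv
    exact hvv

lemma extend_flow (G : Multigraph) (e₀ : G.E) (hst : ¬ G.IsLoop e₀)
    (g : {e : G.E // e ≠ e₀} → A) (hg : (G.contract e₀).IsFlow g) :
    G.IsFlow (extend G e₀ g) := by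
  obtain ⟨hm, ho⟩ := (isFlow_contract_iff' G e₀ g).mp hg
  rw [isFlow_iff]
  have hrw : ∀ (p : G.E → Prop),
      (∑ᶠ x : {e : G.E // e ≠ e₀}, if p x.1 then extend G e₀ g x.1 else 0)
        = ∑ᶠ x : {e : G.E // e ≠ e₀}, if p x.1 then g x else 0 :=
    fun p => finsum_congr fun x => by rw [extend_ne G e₀ g x]
  intro v
  rw [sum_split (fun e => if G.hd e = v then extend G e₀ g e else 0) e₀,
      sum_split (fun e => if G.tl e = v then extend G e₀ g e else 0) e₀,
      hrw (fun a => G.hd a = v), hrw (fun a => G.tl a = v), extend_e0]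
  by_cases hvs : v = G.hd e₀
  · subst hvs
    rw [if_pos rfl, if_neg (show ¬(G.tl e₀ = G.hd e₀) from fun h => hst h.symm), zero_add, extVal]
    abel
  · by_cases hvt : v = G.tl e₀
    · subst hvt
      rw [if_neg (show ¬(G.hd e₀ = G.tl e₀) from hst), if_pos rfl, zero_add]
      have hsplit : ∀ (φ : {e : G.E // e ≠ e₀} → G.V),
          (∑ᶠ e : {e : G.E // e ≠ e₀}, if (φ e = G.hd e₀ ∨ φ e = G.tl e₀) then g e else 0)
          = (∑ᶠ e : {e : G.E // e ≠ e₀}, if φ e = G.hd e₀ then g e else 0)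
            + ∑ᶠ e : {e : G.E // e ≠ e₀}, if φ e = G.tl e₀ then g e else 0 := by
        intro φ
        rw [← sum_add]
        exact finsum_congr fun e => (ite_or_add _ _ _ (fun h => hst (h.1.symm.trans h.2))).symm
      rw [hsplit (fun e => G.hd e.1), hsplit (fun e => G.tl e.1)] at hm
      rw [extVal]
      have harr : (∑ᶠ e : {e : G.E // e ≠ e₀}, if G.tl e.1 = G.hd e₀ then g e else 0)
            - (∑ᶠ e : {e : G.E // e ≠ e₀}, if G.hd e.1 = G.hd e₀ then g e else 0)
            + (∑ᶠ e : {e : G.E // e ≠ e₀}, if G.tl e.1 = G.tl e₀ then g e else 0)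
          = ((∑ᶠ e : {e : G.E // e ≠ e₀}, if G.tl e.1 = G.hd e₀ then g e else 0)
            + (∑ᶠ e : {e : G.E // e ≠ e₀}, if G.tl e.1 = G.tl e₀ then g e else 0))
            - (∑ᶠ e : {e : G.E // e ≠ e₀}, if G.hd e.1 = G.hd e₀ then g e else 0) := by abel
      rw [harr, ← hm]
      abel
    · rw [if_neg (show ¬(G.hd e₀ = v) from fun h => hvs h.symm),
          if_neg (show ¬(G.tl e₀ = v) from fun h => hvt h.symm), zero_add, zero_add]
      exact ho v (by tauto)

variable (A) in
lemma card_empty (G : Multigraph) (h : IsEmpty G.E) :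
    Nat.card {f : G.E → A // G.IsFlow f ∧ ∀ e, f e ≠ 0} = 1 := by
  haveI := h
  have hall : ∀ f : G.E → A, G.IsFlow f ∧ ∀ e, f e ≠ 0 := by
    intro f
    refine ⟨fun v => ?_, fun e => isEmptyElim e⟩
    rw [Set.eq_empty_of_isEmpty {e : G.E | G.hd e = v},
        Set.eq_empty_of_isEmpty {e : G.E | G.tl e = v}]
  rw [Nat.card_congr (Equiv.subtypeUnivEquiv hall)]
  exact Nat.card_unique

variable (A) in
lemma card_coloop (G : Multigraph) (e₀ : G.E) (hc : G.IsColoop e₀) :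
    Nat.card {f : G.E → A // G.IsFlow f ∧ ∀ e, f e ≠ 0} = 0 := by
  haveI : IsEmpty {f : G.E → A // G.IsFlow f ∧ ∀ e, f e ≠ 0} :=
    ⟨fun f => f.2.2 e₀ (coloop_flow_zero G e₀ hc f.1 f.2.1)⟩
  exact Nat.card_of_isEmpty

variable (A) in
lemma card_loop (G : Multigraph) (e₀ : G.E) (hl : G.IsLoop e₀) :
    Nat.card {f : G.E → A // G.IsFlow f ∧ ∀ e, f e ≠ 0}
      = Nat.card {a : A // a ≠ 0}
        * Nat.card {g : (G.del e₀).E → A // (G.del e₀).IsFlow g ∧ ∀ e, g e ≠ 0} := by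
  rw [← Nat.card_prod]
  apply Nat.card_congr
  have hcond : ∀ f : G.E → A, ∀ v : G.V,
      (if G.hd e₀ = v then f e₀ else 0) = (if G.tl e₀ = v then f e₀ else 0) := by
    intro f v
    rw [show G.hd e₀ = G.tl e₀ from hl]
  refine
    { toFun := fun f => (⟨f.1 e₀, f.2.2 e₀⟩,
        ⟨fun x => f.1 x.1, (isFlow_del_iff G e₀ f.1 (hcond f.1)).mp f.2.1,
          fun x => f.2.2 x.1⟩)
      invFun := fun ag =>
        ⟨fun e => if h : e = e₀ then ag.1.1 else ag.2.1 ⟨e, h⟩, ?_, ?_⟩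
      left_inv := ?_
      right_inv := ?_ }
  · have := ag.2.2.1
    rw [isFlow_del_iff G e₀ _ (hcond _)]
    convert this using 2 with x
    simp [x.2]
    rfl
  · intro e
    show (if h : e = e₀ then ag.1.1 else ag.2.1 ⟨e, h⟩) ≠ 0
    by_cases h : e = e₀
    · rw [dif_pos h]; exact ag.1.2
    · rw [dif_neg h]; exact ag.2.2.2 ⟨e, h⟩
  · intro f
    apply Subtype.ext
    funext e
    show (if h : e = e₀ then f.1 e₀ else f.1 (Subtype.mk e h).1) = f.1 e
    by_cases h : e = e₀
    · subst h; simp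
    · rw [dif_neg h]
  · intro ag
    refine Prod.ext (Subtype.ext ?_) (Subtype.ext ?_)
    · simp
    · funext x
      simp [x.2]
      rfl

variable (A) in
lemma card_contract [Finite A] (G : Multigraph) (e₀ : G.E) (hst : ¬ G.IsLoop e₀) :
    Nat.card {g : (G.contract e₀).E → A // (G.contract e₀).IsFlow g ∧ ∀ e, g e ≠ 0}
      = Nat.card {f : G.E → A // G.IsFlow f ∧ ∀ e, f e ≠ 0}
        + Nat.card {g : (G.del e₀).E → A // (G.del e₀).IsFlow g ∧ ∀ e, g e ≠ 0} := by
  classical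
  haveI : Fintype A := Fintype.ofFinite A
  set W := {f : G.E → A // G.IsFlow f ∧ ∀ x : {e : G.E // e ≠ e₀}, f x.1 ≠ 0} with hW
  have eW : {g : (G.contract e₀).E → A // (G.contract e₀).IsFlow g ∧ ∀ e, g e ≠ 0} ≃ W :=
    { toFun := fun g => ⟨extend G e₀ g.1, extend_flow G e₀ hst g.1 g.2.1,
        fun x => by rw [extend_ne G e₀ g.1 x]; exact g.2.2 x⟩
      invFun := fun f => ⟨fun x => f.1 x.1, restrict_contract_flow G e₀ hst f.1 f.2.1,
        fun x => f.2.2 x⟩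
      left_inv := fun g => Subtype.ext (funext fun x => extend_ne G e₀ g.1 x)
      right_inv := fun f => Subtype.ext (extend_restrict G e₀ f.1 hst f.2.1) }
  rw [Nat.card_congr eW]
  have esplit := Equiv.sumCompl (fun w : W => w.1 e₀ ≠ 0)
  rw [← Nat.card_congr esplit, Nat.card_sum]
  congr 1
  · apply Nat.card_congr
    refine
      { toFun := fun w => ⟨w.1.1, w.1.2.1, fun e => ?_⟩
        invFun := fun f => ⟨⟨f.1, f.2.1, fun x => f.2.2 x.1⟩, f.2.2 e₀⟩
        left_inv := fun w => Subtype.ext (Subtype.ext rfl)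
        right_inv := fun f => Subtype.ext rfl }
    by_cases h : e = e₀
    · rw [h]; exact w.2
    · exact w.1.2.2 ⟨e, h⟩
  · apply Nat.card_congr
    have hcond : ∀ f : G.E → A, f e₀ = 0 → ∀ v : G.V,
        (if G.hd e₀ = v then f e₀ else 0) = (if G.tl e₀ = v then f e₀ else 0) := by
      intro f h0 v
      rw [h0]
      simp
    refine
      { toFun := fun w => ⟨fun x => w.1.1 x.1,
          (isFlow_del_iff G e₀ w.1.1 (hcond w.1.1 (not_not.mp w.2))).mp w.1.2.1,
          fun x => w.1.2.2 x⟩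
        invFun := fun g => ⟨⟨fun e => if h : e = e₀ then 0 else g.1 ⟨e, h⟩, ?_, ?_⟩, ?_⟩
        left_inv := ?_
        right_inv := ?_ }
    · have := g.2.1
      rw [isFlow_del_iff G e₀ _ (hcond _ (dif_pos rfl))]
      convert this using 2 with x
      simp [x.2]
      rfl
    · intro x
      show (if h : x.1 = e₀ then 0 else g.1 ⟨x.1, h⟩) ≠ 0
      rw [dif_neg x.2]
      exact g.2.2 ⟨x.1, x.2⟩
    · exact not_not.mpr (dif_pos rfl)
    · intro w
      apply Subtype.ext
      apply Subtype.ext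
      funext e
      show (if h : e = e₀ then 0 else w.1.1 (Subtype.mk e h).1) = w.1.1 e
      by_cases h : e = e₀
      · rw [dif_pos h, h]
        exact (not_not.mp w.2).symm
      · rw [dif_neg h]
    · intro g
      apply Subtype.ext
      funext x
      show (if h : x.1 = e₀ then 0 else g.1 ⟨x.1, h⟩) = g.1 x
      rw [dif_neg x.2]
      rfl

end FlowAux

/-- The number of nowhere-zero `A`-flows on a finite oriented multigraph `G` equals
`φ_G(|A|)`, where the flow polynomial `φ` is characterized by: `φ_G = 1` if `E = ∅`;
`φ_G = (t-1)·φ_{G\e}` if `e` is a loop; `φ_G = 0` if `G` has a coloop; and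
`φ_G = φ_{G/e} - φ_{G\e}` if `e` is neither a loop nor a coloop. In particular the count
depends only on `|A|`. -/
theorem stmt_19 (Φ : Multigraph → Polynomial ℤ)
    (h_empty : ∀ G : Multigraph, IsEmpty G.E → Φ G = 1)
    (h_loop : ∀ (G : Multigraph) (e₀ : G.E), G.IsLoop e₀ →
      Φ G = (Polynomial.X - 1) * Φ (G.del e₀))
    (h_coloop : ∀ G : Multigraph, (∃ e₀ : G.E, G.IsColoop e₀) → Φ G = 0)
    (h_delcon : ∀ (G : Multigraph) (e₀ : G.E), ¬ G.IsLoop e₀ → ¬ G.IsColoop e₀ →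
      Φ G = Φ (G.contract e₀) - Φ (G.del e₀))
    (G : Multigraph) (A : Type) [AddCommGroup A] [Fintype A] (k : ℕ)
    (hk : Fintype.card A = k) :
    (Nat.card {f : G.E → A // G.IsFlow f ∧ ∀ e : G.E, f e ≠ 0} : ℤ) =
      (Φ G).eval (k : ℤ) := by
  classical
  suffices H : ∀ n : ℕ, ∀ G : Multigraph, Nat.card G.E = n →
      (Nat.card {f : G.E → A // G.IsFlow f ∧ ∀ e : G.E, f e ≠ 0} : ℤ) = (Φ G).eval (k : ℤ) by
    exact H _ G rfl
  intro n
  induction n using Nat.strong_induction_on with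
  | _ n IH =>
  intro G hn
  by_cases hE : IsEmpty G.E
  · rw [FlowAux.card_empty A G hE, h_empty G hE]
    simp
  by_cases hcol : ∃ e₀ : G.E, G.IsColoop e₀
  · obtain ⟨e₀, hc⟩ := hcol
    rw [FlowAux.card_coloop A G e₀ hc, h_coloop G ⟨e₀, hc⟩]
    simp
  obtain ⟨e₀⟩ := not_isEmpty_iff.mp hE
  have hncol : ¬ G.IsColoop e₀ := fun h => hcol ⟨e₀, h⟩
  have hlt : Nat.card (G.del e₀).E < n := by
    letI := Fintype.ofFinite G.E
    have h2 : Nat.card (G.del e₀).E = Fintype.card {e : G.E // e ≠ e₀} :=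
      @Nat.card_eq_fintype_card {e : G.E // e ≠ e₀} _
    rw [← hn, Nat.card_eq_fintype_card (α := G.E), h2]
    exact Fintype.card_subtype_lt (p := fun e => e ≠ e₀) (x := e₀) (by simp)
  have hdel := IH _ hlt (G.del e₀) rfl
  by_cases hloop : G.IsLoop e₀
  · rw [FlowAux.card_loop A G e₀ hloop, h_loop G e₀ hloop]
    have hk1 : 1 ≤ k := by rw [← hk]; exact Fintype.card_pos
    have hcard : (Nat.card {a : A // a ≠ 0} : ℤ) = (k : ℤ) - 1 := by
      rw [Nat.card_eq_fintype_card]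
      have h2 : Fintype.card {a : A // ¬ a = 0} = Fintype.card A - Fintype.card {a : A // a = 0} :=
        Fintype.card_subtype_compl _
      rw [Fintype.card_subtype_eq] at h2
      rw [show Fintype.card {a : A // a ≠ 0} = Fintype.card {a : A // ¬ a = 0} from rfl, h2, hk]
      push_cast [hk1]
      ring
    rw [Nat.cast_mul, hcard, hdel, Polynomial.eval_mul, Polynomial.eval_sub, Polynomial.eval_X,
      Polynomial.eval_one]
  · rw [h_delcon G e₀ hloop hncol, Polynomial.eval_sub]
    have hltc : Nat.card (G.contract e₀).E < n := hlt
    have hcon := IH _ hltc (G.contract e₀) rfl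
    have hsum := FlowAux.card_contract A G e₀ hloop
    have hz : (Nat.card {g : (G.contract e₀).E → A //
          (G.contract e₀).IsFlow g ∧ ∀ e, g e ≠ 0} : ℤ)
        = (Nat.card {f : G.E → A // G.IsFlow f ∧ ∀ e : G.E, f e ≠ 0} : ℤ)
          + (Nat.card {g : (G.del e₀).E → A // (G.del e₀).IsFlow g ∧ ∀ e, g e ≠ 0} : ℤ) := by
      exact_mod_cast congrArg (Nat.cast (R := ℤ)) hsum
    linarith [hcon, hdel, hz]
end
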